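/- Set β = (1/2)·√(3 + (1/3)√33), γ = (1 + √33)/8, α = √(15 − √33)/8, and define f(z) = ((483 − 19√33)/1153)^{3/2} · (1 + βz + γz² + αz³)³. Then ‖f‖_{H^{2/3}} = 1 and a_3(f) = √(2(1103 + 33√33)/1153). -/

import Mathlib

open Metric Filter MeasureTheory

/-- The `H^p` norm of a function on the unit disc:
`(sup_{0<r<1} (2π)⁻¹ ∫₀^{2π} |f(r e^{iθ})|^p dθ)^{1/p}`. -/
noncomputable def hpNorm (p : ℝ) (f : ℂ → ℂ) : ℝ :=
  (sSup {x : ℝ | ∃ r : ℝ, 0 < r ∧ r < 1 ∧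
    x = (2 * Real.pi)⁻¹ * ∫ θ in (0:ℝ)..(2 * Real.pi),
      ‖f (r * Complex.exp (θ * Complex.I))‖ ^ p}) ^ (1 / p)

/-- The `n`-th Taylor coefficient of `f` at the origin: `a_n = f⁽ⁿ⁾(0)/n!`. -/
noncomputable def taylorCoeff (f : ℂ → ℂ) (n : ℕ) : ℂ :=
  iteratedDeriv n f 0 / n.factorial

lemma intcos (k : ℝ) (hk : k ≠ 0) (hs : Real.sin (k*(2*Real.pi)) = 0) :
    ∫ θ in (0:ℝ)..(2*Real.pi), Real.cos (k*θ) = 0 := by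
  rw [intervalIntegral.integral_comp_mul_left (fun x => Real.cos x) hk]
  simp [integral_cos, hs]

lemma absP (b c d r θ : ℝ) :
    (‖1 + (b:ℂ)*((r:ℂ)*Complex.exp (θ*Complex.I)) + (c:ℂ)*((r:ℂ)*Complex.exp (θ*Complex.I))^2
      + (d:ℂ)*((r:ℂ)*Complex.exp (θ*Complex.I))^3‖)^2
    = (1 + b*r^2*b + c*r^4*c + d*r^6*d)
      + (2*b*r + 2*b*c*r^3 + 2*c*d*r^5) * Real.cos θ
      + (2*c*r^2 + 2*b*d*r^4) * Real.cos (2*θ)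
      + (2*d*r^3) * Real.cos (3*θ) := by
  have e2 : Complex.exp (θ*Complex.I)^2 = Complex.exp ((2*θ : ℝ)*Complex.I) := by
    rw [← Complex.exp_nat_mul]; push_cast; ring_nf
  have e3 : Complex.exp (θ*Complex.I)^3 = Complex.exp ((3*θ : ℝ)*Complex.I) := by
    rw [← Complex.exp_nat_mul]; push_cast; ring_nf
  rw [Complex.sq_norm, Complex.normSq_apply]
  simp only [mul_pow, e2, e3, Complex.add_re, Complex.add_im, Complex.mul_re, Complex.mul_im,
    Complex.one_re, Complex.one_im, Complex.ofReal_re, Complex.ofReal_im,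
    Complex.exp_ofReal_mul_I_re, Complex.exp_ofReal_mul_I_im, ← Complex.ofReal_pow,
    Complex.ofReal_re, Complex.ofReal_im]
  have p1 := Real.sin_sq_add_cos_sq θ
  have p2 := Real.sin_sq_add_cos_sq (2*θ)
  have p3 := Real.sin_sq_add_cos_sq (3*θ)
  have q1 : Real.cos (2*θ) * Real.cos θ + Real.sin (2*θ) * Real.sin θ = Real.cos θ := by
    rw [← Real.cos_sub]; congr 1; ring
  have q2 : Real.cos (3*θ) * Real.cos θ + Real.sin (3*θ) * Real.sin θ = Real.cos (2*θ) := by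
    rw [← Real.cos_sub]; congr 1; ring
  have q3 : Real.cos (3*θ) * Real.cos (2*θ) + Real.sin (3*θ) * Real.sin (2*θ) = Real.cos θ := by
    rw [← Real.cos_sub]; congr 1; ring
  linear_combination (b^2*r^2)*p1 + (c^2*r^4)*p2 + (d^2*r^6)*p3 + (2*b*c*r^3)*q1
    + (2*b*d*r^4)*q2 + (2*c*d*r^5)*q3

lemma trigint (A B C D : ℝ) :
    ∫ θ in (0:ℝ)..(2*Real.pi),
      (A + B*Real.cos θ + C*Real.cos (2*θ) + D*Real.cos (3*θ)) = 2*Real.pi*A := by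
  have i1 : ∫ θ in (0:ℝ)..(2*Real.pi), Real.cos θ = 0 := by simp [integral_cos]
  have i2 : ∫ θ in (0:ℝ)..(2*Real.pi), Real.cos (2*θ) = 0 := by
    refine intcos 2 (by norm_num) ?_
    rw [show (2:ℝ)*(2*Real.pi) = (4:ℕ)*Real.pi by push_cast; ring]
    exact Real.sin_nat_mul_pi 4
  have i3 : ∫ θ in (0:ℝ)..(2*Real.pi), Real.cos (3*θ) = 0 := by
    refine intcos 3 (by norm_num) ?_
    rw [show (3:ℝ)*(2*Real.pi) = (6:ℕ)*Real.pi by push_cast; ring]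
    exact Real.sin_nat_mul_pi 6
  have c1 : IntervalIntegrable (fun θ => B*Real.cos θ) MeasureTheory.volume 0 (2*Real.pi) :=
    (Continuous.intervalIntegrable (by continuity) _ _)
  have c2 : IntervalIntegrable (fun θ => C*Real.cos (2*θ)) MeasureTheory.volume 0 (2*Real.pi) :=
    (Continuous.intervalIntegrable (by continuity) _ _)
  have c3 : IntervalIntegrable (fun θ => D*Real.cos (3*θ)) MeasureTheory.volume 0 (2*Real.pi) :=
    (Continuous.intervalIntegrable (by continuity) _ _)
  have c0 : IntervalIntegrable (fun _ : ℝ => A) MeasureTheory.volume 0 (2*Real.pi) :=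
    intervalIntegrable_const
  rw [intervalIntegral.integral_add ((c0.add c1).add c2) c3,
      intervalIntegral.integral_add (c0.add c1) c2,
      intervalIntegral.integral_add c0 c1,
      intervalIntegral.integral_const,
      intervalIntegral.integral_const_mul, intervalIntegral.integral_const_mul,
      intervalIntegral.integral_const_mul, i1, i2, i3]
  simp [smul_eq_mul, mul_comm]

lemma rpow_helper (c A : ℝ) (hc : 0 ≤ c) (hA : 0 ≤ A) :
    (c^((3:ℝ)/2) * A^3) ^ ((2:ℝ)/3) = c * A^2 := by
  rw [Real.mul_rpow (Real.rpow_nonneg hc _) (pow_nonneg hA 3),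
      ← Real.rpow_natCast A 3, ← Real.rpow_mul hc, ← Real.rpow_mul hA]
  norm_num

lemma hasDerivAt_poly9 (a0 a1 a2 a3 a4 a5 a6 a7 a8 a9 z : ℂ) :
    HasDerivAt (fun z : ℂ => a0 + a1*z + a2*z^2 + a3*z^3 + a4*z^4 + a5*z^5
        + a6*z^6 + a7*z^7 + a8*z^8 + a9*z^9)
      (a1 + 2*a2*z + 3*a3*z^2 + 4*a4*z^3 + 5*a5*z^4 + 6*a6*z^5 + 7*a7*z^6
        + 8*a8*z^7 + 9*a9*z^8) z := by
  have h : ∀ (n : ℕ) (c : ℂ), HasDerivAt (fun z : ℂ => c*z^n) (c*(n*z^(n-1))) z :=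
    fun n c => (hasDerivAt_pow n z).const_mul c
  have T := ((((((((((hasDerivAt_const z a0).add (h 1 a1)).add (h 2 a2)).add (h 3 a3)).add
    (h 4 a4)).add (h 5 a5)).add (h 6 a6)).add (h 7 a7)).add (h 8 a8)).add (h 9 a9))
  have hF : (fun z : ℂ => a0 + a1*z^1 + a2*z^2 + a3*z^3 + a4*z^4 + a5*z^5
      + a6*z^6 + a7*z^7 + a8*z^8 + a9*z^9)
      = (fun z : ℂ => a0 + a1*z + a2*z^2 + a3*z^3 + a4*z^4 + a5*z^5
      + a6*z^6 + a7*z^7 + a8*z^8 + a9*z^9) := by funext w; ring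
  replace T : HasDerivAt (fun z : ℂ => a0 + a1*z^1 + a2*z^2 + a3*z^3 + a4*z^4 + a5*z^5
      + a6*z^6 + a7*z^7 + a8*z^8 + a9*z^9) _ z := T
  rw [hF] at T
  convert T using 1
  push_cast
  ring

lemma third_deriv_poly9 (a0 a1 a2 a3 a4 a5 a6 a7 a8 a9 : ℂ) :
    iteratedDeriv 3 (fun z : ℂ => a0 + a1*z + a2*z^2 + a3*z^3 + a4*z^4 + a5*z^5
        + a6*z^6 + a7*z^7 + a8*z^8 + a9*z^9) 0 = 6*a3 := by
  have d1 : deriv (fun z : ℂ => a0 + a1*z + a2*z^2 + a3*z^3 + a4*z^4 + a5*z^5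
        + a6*z^6 + a7*z^7 + a8*z^8 + a9*z^9)
      = fun z : ℂ => a1 + (2*a2)*z + (3*a3)*z^2 + (4*a4)*z^3 + (5*a5)*z^4 + (6*a6)*z^5
        + (7*a7)*z^6 + (8*a8)*z^7 + (9*a9)*z^8 + 0*z^9 := by
    funext z
    rw [(hasDerivAt_poly9 a0 a1 a2 a3 a4 a5 a6 a7 a8 a9 z).deriv]
    ring
  have d2 : deriv (fun z : ℂ => a1 + (2*a2)*z + (3*a3)*z^2 + (4*a4)*z^3 + (5*a5)*z^4 + (6*a6)*z^5
        + (7*a7)*z^6 + (8*a8)*z^7 + (9*a9)*z^8 + 0*z^9)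
      = fun z : ℂ => (2*a2) + (2*(3*a3))*z + (3*(4*a4))*z^2 + (4*(5*a5))*z^3 + (5*(6*a6))*z^4
        + (6*(7*a7))*z^5 + (7*(8*a8))*z^6 + (8*(9*a9))*z^7 + 0*z^8 + 0*z^9 := by
    funext z
    rw [(hasDerivAt_poly9 a1 (2*a2) (3*a3) (4*a4) (5*a5) (6*a6) (7*a7) (8*a8) (9*a9) 0 z).deriv]
    ring
  have d3 : deriv (fun z : ℂ => (2*a2) + (2*(3*a3))*z + (3*(4*a4))*z^2 + (4*(5*a5))*z^3
        + (5*(6*a6))*z^4 + (6*(7*a7))*z^5 + (7*(8*a8))*z^6 + (8*(9*a9))*z^7 + 0*z^8 + 0*z^9) 0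
      = 6*a3 := by
    rw [(hasDerivAt_poly9 (2*a2) (2*(3*a3)) (3*(4*a4)) (4*(5*a5)) (5*(6*a6)) (6*(7*a7))
      (7*(8*a8)) (8*(9*a9)) 0 0 (0:ℂ)).deriv]
    ring
  rw [show (3:ℕ) = 2+1 from rfl, iteratedDeriv_succ, iteratedDeriv_succ, iteratedDeriv_one,
    d1, d2, d3]

theorem C3_two_thirds_extremal_function (β γ α : ℝ)
    (hβ : β = Real.sqrt (3 + (1/3) * Real.sqrt 33) / 2)
    (hγ : γ = (1 + Real.sqrt 33) / 8)
    (hα : α = Real.sqrt (15 - Real.sqrt 33) / 8)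
    (f : ℂ → ℂ)
    (hf : ∀ z : ℂ, f z = ((((483 - 19 * Real.sqrt 33) / 1153) ^ ((3:ℝ)/2) : ℝ) : ℂ) *
      (1 + (β : ℂ) * z + (γ : ℂ) * z ^ 2 + (α : ℂ) * z ^ 3) ^ 3) :
    hpNorm (2/3) f = 1 ∧
      taylorCoeff f 3 = ((Real.sqrt (2 * (1103 + 33 * Real.sqrt 33) / 1153) : ℝ) : ℂ) := by
  have hw0 : (0:ℝ) ≤ Real.sqrt 33 := Real.sqrt_nonneg 33
  have hwsq : Real.sqrt 33 ^ 2 = 33 := Real.sq_sqrt (by norm_num)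
  have hw6 : Real.sqrt 33 < 6 := by nlinarith [hwsq, hw0]
  have hc0 : (0:ℝ) < (483 - 19*Real.sqrt 33)/1153 := by nlinarith
  have hb0 : 0 ≤ β := by rw [hβ]; positivity
  have hg0 : 0 ≤ γ := by rw [hγ]; positivity
  have ha0 : 0 ≤ α := by rw [hα]; positivity
  have hb2 : β^2 = (9+Real.sqrt 33)/12 := by
    rw [hβ, div_pow, Real.sq_sqrt (by positivity)]; ring
  have ha2 : α^2 = (15-Real.sqrt 33)/64 := by
    rw [hα, div_pow, Real.sq_sqrt (by nlinarith)]; norm_num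
  have hab : α*β = (1+Real.sqrt 33)/16 := by
    rw [hα, hβ, div_mul_div_comm, ← Real.sqrt_mul (by nlinarith),
      show (15 - Real.sqrt 33)*(3 + 1/3*Real.sqrt 33) = (1+Real.sqrt 33)^2 by
        linear_combination (-(4:ℝ)/3)*hwsq,
      Real.sqrt_sq (by positivity)]
    ring
  have key1 : (483-19*Real.sqrt 33)/1153 * (1 + β^2 + γ^2 + α^2) = 1 := by
    rw [hγ]
    linear_combination ((483-19*Real.sqrt 33)/1153)*hb2 + ((483-19*Real.sqrt 33)/1153)*ha2
      + (17/3459 - 19/73792*Real.sqrt 33)*hwsq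
  constructor
  · have stepA : ∀ z : ℂ, ‖f z‖ ^ ((2:ℝ)/3)
        = (483-19*Real.sqrt 33)/1153 * (‖1 + (β:ℂ)*z + (γ:ℂ)*z^2 + (α:ℂ)*z^3‖)^2 := by
      intro z
      rw [hf z, norm_mul, norm_pow, Complex.norm_real, Real.norm_eq_abs,
        abs_of_nonneg (Real.rpow_nonneg hc0.le _)]
      exact rpow_helper _ _ hc0.le (norm_nonneg _)
    have hint : ∀ r : ℝ, ((2*Real.pi)⁻¹ * ∫ θ in (0:ℝ)..(2*Real.pi),
          ‖f (↑r * Complex.exp (↑θ * Complex.I))‖ ^ ((2:ℝ)/3))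
        = (483-19*Real.sqrt 33)/1153 * (1 + β^2*r^2 + γ^2*r^4 + α^2*r^6) := by
      intro r
      have e : (∫ θ in (0:ℝ)..(2*Real.pi),
            ‖f (↑r * Complex.exp (↑θ * Complex.I))‖ ^ ((2:ℝ)/3))
          = ∫ θ in (0:ℝ)..(2*Real.pi),
            (((483-19*Real.sqrt 33)/1153*(1 + β*r^2*β + γ*r^4*γ + α*r^6*α))
            + ((483-19*Real.sqrt 33)/1153*(2*β*r + 2*β*γ*r^3 + 2*γ*α*r^5))*Real.cos θ
            + ((483-19*Real.sqrt 33)/1153*(2*γ*r^2 + 2*β*α*r^4))*Real.cos (2*θ)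
            + ((483-19*Real.sqrt 33)/1153*(2*α*r^3))*Real.cos (3*θ)) := by
        refine intervalIntegral.integral_congr fun θ _ => ?_
        rw [stepA, absP β γ α r θ]
        ring
      have hπ : (2*Real.pi) ≠ 0 := by positivity
      rw [e, trigint, ← mul_assoc, inv_mul_cancel₀ hπ, one_mul]
      ring
    unfold hpNorm
    have hmem : ∀ r : ℝ, 0 < r → r < 1 →
        (483-19*Real.sqrt 33)/1153 * (1 + β^2*r^2 + γ^2*r^4 + α^2*r^6) ∈
        {x : ℝ | ∃ r : ℝ, 0 < r ∧ r < 1 ∧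
          x = (2 * Real.pi)⁻¹ * ∫ θ in (0:ℝ)..(2 * Real.pi),
            ‖f (r * Complex.exp (θ * Complex.I))‖ ^ ((2:ℝ)/3)} :=
      fun r h0 h1 => ⟨r, h0, h1, (hint r).symm⟩
    have ub : ∀ x ∈ {x : ℝ | ∃ r : ℝ, 0 < r ∧ r < 1 ∧
        x = (2 * Real.pi)⁻¹ * ∫ θ in (0:ℝ)..(2 * Real.pi),
          ‖f (r * Complex.exp (θ * Complex.I))‖ ^ ((2:ℝ)/3)}, x ≤ 1 := by
      rintro x ⟨r, hr0, hr1, rfl⟩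
      rw [hint r]
      have h2 : r^2 ≤ 1 := by nlinarith
      have h4 : r^4 ≤ 1 := by nlinarith
      have h6 : r^6 ≤ 1 := by nlinarith
      nlinarith [key1, mul_nonneg (mul_nonneg hc0.le (sq_nonneg β)) (sub_nonneg.2 h2),
        mul_nonneg (mul_nonneg hc0.le (sq_nonneg γ)) (sub_nonneg.2 h4),
        mul_nonneg (mul_nonneg hc0.le (sq_nonneg α)) (sub_nonneg.2 h6)]
    have hne : Set.Nonempty {x : ℝ | ∃ r : ℝ, 0 < r ∧ r < 1 ∧
        x = (2 * Real.pi)⁻¹ * ∫ θ in (0:ℝ)..(2 * Real.pi),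
          ‖f (r * Complex.exp (θ * Complex.I))‖ ^ ((2:ℝ)/3)} :=
      ⟨_, hmem (1/2) (by norm_num) (by norm_num)⟩
    have hbdd : BddAbove {x : ℝ | ∃ r : ℝ, 0 < r ∧ r < 1 ∧
        x = (2 * Real.pi)⁻¹ * ∫ θ in (0:ℝ)..(2 * Real.pi),
          ‖f (r * Complex.exp (θ * Complex.I))‖ ^ ((2:ℝ)/3)} := ⟨1, ub⟩
    have hsup : sSup {x : ℝ | ∃ r : ℝ, 0 < r ∧ r < 1 ∧
        x = (2 * Real.pi)⁻¹ * ∫ θ in (0:ℝ)..(2 * Real.pi),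
          ‖f (r * Complex.exp (θ * Complex.I))‖ ^ ((2:ℝ)/3)} = 1 := by
      refine le_antisymm (csSup_le hne ub) ?_
      by_contra h
      push_neg at h
      have hcont : ContinuousAt
          (fun r : ℝ => (483-19*Real.sqrt 33)/1153 * (1 + β^2*r^2 + γ^2*r^4 + α^2*r^6)) 1 := by
        fun_prop
      have hv1 : (483-19*Real.sqrt 33)/1153 * (1 + β^2*(1:ℝ)^2 + γ^2*(1:ℝ)^4 + α^2*(1:ℝ)^6) = 1 := by
        linear_combination key1
      have ht : Tendsto
          (fun r : ℝ => (483-19*Real.sqrt 33)/1153 * (1 + β^2*r^2 + γ^2*r^4 + α^2*r^6))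
          (nhdsWithin 1 (Set.Ioo (0:ℝ) 1)) (nhds 1) := by
        have := hcont.tendsto.mono_left (nhdsWithin_le_nhds (s := Set.Ioo (0:ℝ) 1))
        rwa [hv1] at this
      have hnb : (nhdsWithin (1:ℝ) (Set.Ioo (0:ℝ) 1)).NeBot :=
        right_nhdsWithin_Ioo_neBot (by norm_num)
      obtain ⟨r, hrb, hr⟩ :=
        ((ht.eventually (eventually_gt_nhds h)).and eventually_mem_nhdsWithin).exists
      exact absurd (le_csSup hbdd (hmem r hr.1 hr.2)) (not_le.2 hrb)
    rw [hsup, Real.one_rpow]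
  · have hf9 : f = fun z : ℂ =>
        ((((483 - 19 * Real.sqrt 33) / 1153) ^ ((3:ℝ)/2) : ℝ) : ℂ)*1
        + (((((483 - 19 * Real.sqrt 33) / 1153) ^ ((3:ℝ)/2) : ℝ) : ℂ)*(3*(β:ℂ)))*z
        + (((((483 - 19 * Real.sqrt 33) / 1153) ^ ((3:ℝ)/2) : ℝ) : ℂ)*(3*(γ:ℂ)+3*(β:ℂ)^2))*z^2
        + (((((483 - 19 * Real.sqrt 33) / 1153) ^ ((3:ℝ)/2) : ℝ) : ℂ)*(3*(α:ℂ)+6*(β:ℂ)*(γ:ℂ)+(β:ℂ)^3))*z^3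
        + (((((483 - 19 * Real.sqrt 33) / 1153) ^ ((3:ℝ)/2) : ℝ) : ℂ)*(6*(α:ℂ)*(β:ℂ)+3*(γ:ℂ)^2+3*(β:ℂ)^2*(γ:ℂ)))*z^4
        + (((((483 - 19 * Real.sqrt 33) / 1153) ^ ((3:ℝ)/2) : ℝ) : ℂ)*(6*(α:ℂ)*(γ:ℂ)+3*(α:ℂ)*(β:ℂ)^2+3*(β:ℂ)*(γ:ℂ)^2))*z^5
        + (((((483 - 19 * Real.sqrt 33) / 1153) ^ ((3:ℝ)/2) : ℝ) : ℂ)*(3*(α:ℂ)^2+6*(α:ℂ)*(β:ℂ)*(γ:ℂ)+(γ:ℂ)^3))*z^6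
        + (((((483 - 19 * Real.sqrt 33) / 1153) ^ ((3:ℝ)/2) : ℝ) : ℂ)*(3*(α:ℂ)^2*(β:ℂ)+3*(α:ℂ)*(γ:ℂ)^2))*z^7
        + (((((483 - 19 * Real.sqrt 33) / 1153) ^ ((3:ℝ)/2) : ℝ) : ℂ)*(3*(α:ℂ)^2*(γ:ℂ)))*z^8
        + (((((483 - 19 * Real.sqrt 33) / 1153) ^ ((3:ℝ)/2) : ℝ) : ℂ)*(α:ℂ)^3)*z^9 := by
      funext z
      rw [hf z]
      ring
    unfold taylorCoeff
    rw [hf9, third_deriv_poly9,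
      show ((Nat.factorial 3 : ℕ) : ℂ) = 6 by norm_num [Nat.factorial]]
    have hL0 : 0 ≤ (((483 - 19 * Real.sqrt 33) / 1153) ^ ((3:ℝ)/2))*(3*α+6*β*γ+β^3) :=
      mul_nonneg (Real.rpow_nonneg hc0.le _)
        (by nlinarith [ha0, hb0, hg0, mul_nonneg hb0 hg0, pow_nonneg hb0 3])
    have hK2 : (((483 - 19 * Real.sqrt 33) / 1153) ^ ((3:ℝ)/2))^2
        = ((483-19*Real.sqrt 33)/1153)^3 := by
      rw [← Real.rpow_natCast ((((483 - 19 * Real.sqrt 33) / 1153)) ^ ((3:ℝ)/2)) 2,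
        ← Real.rpow_mul hc0.le]
      norm_num
    have key2 : ((((483 - 19 * Real.sqrt 33) / 1153) ^ ((3:ℝ)/2))*(3*α+6*β*γ+β^3))^2
        = 2*(1103+33*Real.sqrt 33)/1153 := by
      rw [mul_pow, hK2, hγ]
      linear_combination
        (((483-19*Real.sqrt 33)/1153)^3*(β^4 + β^2*((9+Real.sqrt 33)/12) + ((9+Real.sqrt 33)/12)^2
          + 36*((1+Real.sqrt 33)/8)^2 + 12*((1+Real.sqrt 33)/8)*(β^2+(9+Real.sqrt 33)/12)
          + 6*((1+Real.sqrt 33)/16)))*hb2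
        + (9*((483-19*Real.sqrt 33)/1153)^3)*ha2
        + (((483-19*Real.sqrt 33)/1153)^3*(6*β^2 + 36*((1+Real.sqrt 33)/8)))*hab
        + (14204904953/294299246784 - 164303765/49049874464*Real.sqrt 33
          - 147990449/882897740352*Real.sqrt 33^2 + 370025/24524937232*Real.sqrt 33^3
          - 171475/662173305264*Real.sqrt 33^4)*hwsq
    have hreal : (((483 - 19 * Real.sqrt 33) / 1153) ^ ((3:ℝ)/2))*(3*α+6*β*γ+β^3)
        = Real.sqrt (2*(1103+33*Real.sqrt 33)/1153) := by
      rw [← key2, Real.sqrt_sq hL0]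
    rw [← hreal]
    push_cast
    ring
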